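/- Let $p > 1$. For every $\varepsilon > 0$ there exists $c_{\varepsilon} > 0$ such that for all $a, b \ge 0$: $$\frac{1}{p+1}\big[(a+b)^{p+1} - a^{p+1}\big] - a^p b \;\le\; \frac{1+\varepsilon}{2}\, p\, a^{p-1} b^2 + c_{\varepsilon}\, b^{p+1}.$$ -/

import Mathlib

open Real

lemma nonneg_of_deriv' (f f' : ℝ → ℝ) (hc : ContinuousOn f (Set.Ici 0))
    (hd : ∀ x ∈ Set.Ioi (0:ℝ), HasDerivAt f (f' x) x)
    (h0 : 0 ≤ f 0) (h' : ∀ x ∈ Set.Ioi (0:ℝ), 0 ≤ f' x) :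
    ∀ b : ℝ, 0 ≤ b → 0 ≤ f b := by
  intro b hb
  have hmono : MonotoneOn f (Set.Ici 0) := by
    apply monotoneOn_of_deriv_nonneg (convex_Ici 0) hc
    · intro x hx
      rw [interior_Ici] at hx
      exact (hd x hx).differentiableAt.differentiableWithinAt
    · intro x hx
      rw [interior_Ici] at hx
      rw [(hd x hx).deriv]
      exact h' x hx
  exact le_trans h0 (hmono Set.self_mem_Ici hb hb)

lemma rpow_sub_le' (p : ℝ) (hp : 1 < p) (a : ℝ) (ha : 0 < a) (b : ℝ) (hb : 0 ≤ b) :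
    (a + b) ^ p - a ^ p ≤ p * (a + b) ^ (p - 1) * b := by
  have key := nonneg_of_deriv'
    (fun t => p * (a + t) ^ (p - 1) * t - ((a + t) ^ p - a ^ p))
    (fun t => p * (p - 1) * (a + t) ^ (p - 1 - 1) * t)
    ?_ ?_ ?_ ?_ b hb
  · have := key
    linarith
  · intro x hx
    have hax : (0:ℝ) < a + x := by
      simp only [Set.mem_Ici] at hx; linarith
    have h1 : DifferentiableAt ℝ (fun t : ℝ => a + t) x := by fun_prop
    have h2 : DifferentiableAt ℝ (fun t : ℝ => (a + t) ^ (p - 1)) x :=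
      (Real.differentiableAt_rpow_const_of_ne (p - 1) hax.ne').comp x h1
    have h3 : DifferentiableAt ℝ (fun t : ℝ => (a + t) ^ p) x :=
      (Real.differentiableAt_rpow_const_of_ne p hax.ne').comp x h1
    exact (((h2.const_mul p).mul differentiableAt_id).sub
      (h3.sub (differentiableAt_const _))).continuousAt.continuousWithinAt
  · intro x hx
    have hx' : (0:ℝ) < x := hx
    have hax : (0:ℝ) < a + x := by linarith
    have h1 : HasDerivAt (fun t : ℝ => a + t) 1 x := (hasDerivAt_id x).const_add a
    have h2 : HasDerivAt (fun t : ℝ => (a + t) ^ (p - 1))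
        ((p - 1) * (a + x) ^ (p - 1 - 1) * 1) x :=
      (Real.hasDerivAt_rpow_const (Or.inl hax.ne')).comp x h1
    have h3 : HasDerivAt (fun t : ℝ => (a + t) ^ p)
        (p * (a + x) ^ (p - 1) * 1) x :=
      (Real.hasDerivAt_rpow_const (Or.inl hax.ne')).comp x h1
    have h4 : HasDerivAt (fun t : ℝ => p * (a + t) ^ (p - 1) * t)
        (p * ((p - 1) * (a + x) ^ (p - 1 - 1) * 1) * x + p * (a + x) ^ (p - 1) * 1) x := by
      exact (h2.const_mul p).mul (hasDerivAt_id x)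
    have h5 : HasDerivAt (fun t : ℝ => (a + t) ^ p - a ^ p)
        (p * (a + x) ^ (p - 1) * 1) x := h3.sub_const _
    refine (h4.sub h5).congr_deriv ?_
    ring
  · simp
  · intro x hx
    have hx' : (0:ℝ) < x := hx
    have hax : (0:ℝ) < a + x := by linarith
    have h6 : (0:ℝ) < (a + x) ^ (p - 1 - 1) := Real.rpow_pos_of_pos hax _
    have hpp : (0:ℝ) < p * (p - 1) := by nlinarith
    show 0 ≤ p * (p - 1) * (a + x) ^ (p - 1 - 1) * x
    exact le_of_lt (mul_pos (mul_pos hpp h6) hx')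

lemma key_lemma (p : ℝ) (hp : 1 < p) (ε : ℝ) (hε : 0 < ε) :
    ∃ c > 0, ∀ a b : ℝ, 0 ≤ a → 0 ≤ b →
      (a + b) ^ p - a ^ p ≤ (1 + ε) * p * a ^ (p - 1) * b + c * b ^ p := by
  set δ : ℝ := (1 + ε) ^ (p - 1)⁻¹ - 1 with hδdef
  have hp1 : (0:ℝ) < p - 1 := by linarith
  have h1ε : (1:ℝ) < 1 + ε := by linarith
  have hδ : 0 < δ := by
    have : (1:ℝ) < (1 + ε) ^ (p - 1)⁻¹ := by
      rw [Real.one_lt_rpow_iff_of_pos (by linarith)]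
      exact Or.inl ⟨h1ε, by positivity⟩
    simp only [hδdef]; linarith
  have hδpow : (1 + δ) ^ (p - 1) = 1 + ε := by
    have : (1:ℝ) + δ = (1 + ε) ^ (p - 1)⁻¹ := by simp [hδdef]
    rw [this, Real.rpow_inv_rpow (by linarith) (ne_of_gt hp1)]
  refine ⟨(1 + δ⁻¹) ^ p, Real.rpow_pos_of_pos (by positivity) p, ?_⟩
  intro a b ha hb
  have hp0 : (0:ℝ) < p := by linarith
  rcases le_total b (δ * a) with hcase | hcase
  · -- b ≤ δ a
    rcases eq_or_lt_of_le ha with ha0 | ha0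
    · -- a = 0 hence b = 0
      have hb0 : b = 0 := le_antisymm (by rw [← ha0] at hcase; simpa using hcase) hb
      have ha0' : a = 0 := ha0.symm
      subst ha0'; subst hb0
      simp [Real.zero_rpow (ne_of_gt hp0)]
    · have h1 := rpow_sub_le' p hp a ha0 b hb
      have h2 : (a + b) ^ (p - 1) ≤ (1 + ε) * a ^ (p - 1) := by
        have hle : a + b ≤ (1 + δ) * a := by nlinarith
        calc (a + b) ^ (p - 1) ≤ ((1 + δ) * a) ^ (p - 1) :=
              Real.rpow_le_rpow (by linarith) hle (le_of_lt hp1)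
          _ = (1 + δ) ^ (p - 1) * a ^ (p - 1) :=
              Real.mul_rpow (by linarith) (le_of_lt ha0)
          _ = (1 + ε) * a ^ (p - 1) := by rw [hδpow]
      have h3 : p * (a + b) ^ (p - 1) * b ≤ p * ((1 + ε) * a ^ (p - 1)) * b := by
        apply mul_le_mul_of_nonneg_right _ hb
        exact mul_le_mul_of_nonneg_left h2 (le_of_lt hp0)
      have h4 : (0:ℝ) ≤ (1 + δ⁻¹) ^ p * b ^ p := by positivity
      nlinarith
  · -- δ a ≤ b
    have h1 : a + b ≤ (1 + δ⁻¹) * b := by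
      have : a ≤ δ⁻¹ * b := by
        rw [inv_mul_eq_div, le_div_iff₀ hδ]
        nlinarith
      linarith
    have h2 : (a + b) ^ p ≤ (1 + δ⁻¹) ^ p * b ^ p := by
      calc (a + b) ^ p ≤ ((1 + δ⁻¹) * b) ^ p :=
            Real.rpow_le_rpow (by linarith) h1 (le_of_lt hp0)
        _ = (1 + δ⁻¹) ^ p * b ^ p := Real.mul_rpow (by positivity) hb
    have h3 : (0:ℝ) ≤ a ^ p := Real.rpow_nonneg ha p
    have h4 : (0:ℝ) ≤ (1 + ε) * p * a ^ (p - 1) * b := by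
      have : (0:ℝ) ≤ a ^ (p - 1) := Real.rpow_nonneg ha _
      positivity
    linarith

theorem stmt_11 (p : ℝ) (hp : 1 < p) :
    ∀ ε : ℝ, 0 < ε → ∃ c > 0, ∀ a b : ℝ, 0 ≤ a → 0 ≤ b →
      (1 / (p + 1)) * ((a + b) ^ (p + 1) - a ^ (p + 1)) - a ^ p * b ≤
        ((1 + ε) / 2) * p * a ^ (p - 1) * b ^ 2 + c * b ^ (p + 1) := by
  intro ε hε
  obtain ⟨c, hc, hkey⟩ := key_lemma p hp ε hε
  have hp1 : (0:ℝ) < p + 1 := by linarith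
  refine ⟨c / (p + 1), by positivity, ?_⟩
  intro a b ha hb
  set φ : ℝ → ℝ := fun t =>
    ((1 + ε) / 2) * p * a ^ (p - 1) * t ^ 2 + (c / (p + 1)) * t ^ (p + 1)
      + a ^ p * t + (1 / (p + 1)) * a ^ (p + 1) - (1 / (p + 1)) * (a + t) ^ (p + 1)
    with hφ
  have hφb := nonneg_of_deriv' φ
    (fun t => (1 + ε) * p * a ^ (p - 1) * t + c * t ^ p + a ^ p - (a + t) ^ p)
    ?_ ?_ ?_ ?_ b hb
  · simp only [hφ] at hφb
    linarith
  · -- continuity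
    apply Continuous.continuousOn
    have h1 : Continuous fun t : ℝ => t ^ (p + 1) :=
      continuous_id.rpow_const (fun x => Or.inr (by linarith))
    have h2 : Continuous fun t : ℝ => (a + t) ^ (p + 1) :=
      (continuous_const.add continuous_id).rpow_const (fun x => Or.inr (by linarith))
    fun_prop
  · -- derivative
    intro x hx
    have hx' : (0:ℝ) < x := hx
    have hax : (0:ℝ) < a + x := by linarith
    have hd1 : HasDerivAt (fun t : ℝ => ((1 + ε) / 2) * p * a ^ (p - 1) * t ^ 2)
        (((1 + ε) / 2) * p * a ^ (p - 1) * (2 * x)) x := by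
      have : HasDerivAt (fun t : ℝ => t ^ 2) ((2:ℕ) * x ^ (2 - 1)) x := hasDerivAt_pow 2 x
      simpa using this.const_mul (((1 + ε) / 2) * p * a ^ (p - 1))
    have hd2 : HasDerivAt (fun t : ℝ => (c / (p + 1)) * t ^ (p + 1))
        ((c / (p + 1)) * ((p + 1) * x ^ (p + 1 - 1))) x :=
      (Real.hasDerivAt_rpow_const (Or.inl hx'.ne')).const_mul _
    have hd3 : HasDerivAt (fun t : ℝ => a ^ p * t) (a ^ p) x := by
      simpa using (hasDerivAt_id x).const_mul (a ^ p)
    have hd4 : HasDerivAt (fun t : ℝ => (a + t) ^ (p + 1))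
        ((p + 1) * (a + x) ^ (p + 1 - 1) * 1) x :=
      (Real.hasDerivAt_rpow_const (Or.inl hax.ne')).comp x ((hasDerivAt_id x).const_add a)
    have hd := (((hd1.add hd2).add hd3).add_const ((1 / (p + 1)) * a ^ (p + 1))).sub
      (hd4.const_mul (1 / (p + 1)))
    refine hd.congr_deriv ?_
    have e1 : p + 1 - 1 = p := by ring
    rw [e1]
    field_simp
  · -- value at 0
    simp only [hφ]
    rw [Real.zero_rpow (ne_of_gt hp1)]
    simp
  · -- derivative nonneg
    intro x hx
    have hx' : (0:ℝ) < x := hx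
    have := hkey a x ha (le_of_lt hx')
    show 0 ≤ (1 + ε) * p * a ^ (p - 1) * x + c * x ^ p + a ^ p - (a + x) ^ p
    linarith
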